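/- Let (M, 𝒰) satisfy the SAF-condition and 𝒬 be a vector bundle of trivial type on M. Then for every vector bundle homomorphism φ : Λ²(𝒰 ⊗ 𝒬) → Sym²𝒰 there is a holomorphic section ω of Λ²𝒬* such that φₓ(u⊗p, v⊗q) = ωₓ(p,q)·(u⊙v) for all x ∈ M, u,v ∈ 𝒰ₓ, p,q ∈ 𝒬ₓ. -/

import Mathlib

noncomputable section

open Module
open scoped TensorProduct

/-- Data witnessing that along a rational curve through `(x, u)` the pullback
of the rank-`m` bundle `𝒰` splits as `ℒ ⊕ 𝒪^{m-1}` with `ℒ` ample of degree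
`a ≥ 1` and fiber `ℂu` at the base point (SAF-condition), and that the
pullback of the rank-`n` bundle `𝒬` is trivial (trivial type).  The curve is
encoded by its two affine charts `f`, `g` glued by `t ↦ t⁻¹`, and the bundles
by trivializations over the two charts with the indicated transition
matrices (`diag(t^{-a},1,…,1)` for `𝒰`, the identity for `𝒬`). -/
structure SAFCurveQ (M : Type*) (𝒰 𝒬 : M → Type*)
    [∀ x, AddCommGroup (𝒰 x)] [∀ x, Module ℂ (𝒰 x)]
    [∀ x, AddCommGroup (𝒬 x)] [∀ x, Module ℂ (𝒬 x)]
    (m n : ℕ) (hm : 0 < m) (x : M) (u : 𝒰 x) where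
  f : ℂ → M
  g : ℂ → M
  compat : ∀ t : ℂ, t ≠ 0 → f t = g t⁻¹
  basept : f 0 = x
  a : ℕ
  ample : 1 ≤ a
  τ : ∀ t : ℂ, (Fin m → ℂ) ≃ₗ[ℂ] 𝒰 (f t)
  τ' : ∀ t : ℂ, (Fin m → ℂ) ≃ₗ[ℂ] 𝒰 (g t)
  trans : ∀ (t : ℂ) (ht : t ≠ 0) (c : Fin m → ℂ),
    τ t c = cast (congrArg 𝒰 (compat t ht)).symm
      (τ' t⁻¹ (fun i => (if (i : ℕ) = 0 then (t : ℂ) ^ (-(a : ℤ)) else 1) * c i))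
  fiber : ∃ cc : ℂ, cc ≠ 0 ∧ τ 0 (Pi.single ⟨0, hm⟩ 1) = cc • (cast (congrArg 𝒰 basept).symm u)
  κ : ∀ t : ℂ, (Fin n → ℂ) ≃ₗ[ℂ] 𝒬 (f t)
  κ' : ∀ t : ℂ, (Fin n → ℂ) ≃ₗ[ℂ] 𝒬 (g t)
  transQ : ∀ (t : ℂ) (ht : t ≠ 0) (c : Fin n → ℂ),
    κ t c = cast (congrArg 𝒬 (compat t ht)).symm (κ' t⁻¹ c)

variable {M : Type*} {𝒰 𝒬 : M → Type*}
  [∀ x, AddCommGroup (𝒰 x)] [∀ x, Module ℂ (𝒰 x)]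
  [∀ x, AddCommGroup (𝒬 x)] [∀ x, Module ℂ (𝒬 x)]
  {m n : ℕ}


section Helpers

variable {M : Type*} {𝒰 𝒬 : M → Type*}
  [∀ x, AddCommGroup (𝒰 x)] [∀ x, Module ℂ (𝒰 x)]
  [∀ x, AddCommGroup (𝒬 x)] [∀ x, Module ℂ (𝒬 x)]

/-- cast between fibers as a linear equivalence -/
def castLE (𝒰 : M → Type*) [∀ x, AddCommGroup (𝒰 x)] [∀ x, Module ℂ (𝒰 x)]
    {y x : M} (h : y = x) : 𝒰 y ≃ₗ[ℂ] 𝒰 x := by subst h; exact LinearEquiv.refl ℂ (𝒰 y)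

lemma castLE_symm_cast {y x : M} (h : y = x) (u : 𝒰 x) :
    (castLE 𝒰 h).symm u = cast (congrArg 𝒰 h).symm u := by subst h; rfl

lemma castLE_cast {y x : M} (h : y = x) (u : 𝒰 y) :
    castLE 𝒰 h u = cast (congrArg 𝒰 h) u := by subst h; rfl

lemma phi_cast (φ : ∀ y : M, (𝒰 y ⊗[ℂ] 𝒬 y) →ₗ[ℂ] (𝒰 y ⊗[ℂ] 𝒬 y) →ₗ[ℂ]
      (Module.Dual ℂ (𝒰 y) →ₗ[ℂ] Module.Dual ℂ (𝒰 y) →ₗ[ℂ] ℂ))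
    {y x : M} (h : y = x) (A B : 𝒰 x) (P Q : 𝒬 x) (f g : Module.Dual ℂ (𝒰 y)) :
    φ y ((castLE 𝒰 h).symm A ⊗ₜ[ℂ] (castLE 𝒬 h).symm P)
        ((castLE 𝒰 h).symm B ⊗ₜ[ℂ] (castLE 𝒬 h).symm Q) f g
    = φ x (A ⊗ₜ[ℂ] P) (B ⊗ₜ[ℂ] Q)
        (f.comp ((castLE 𝒰 h).symm : 𝒰 x →ₗ[ℂ] 𝒰 y))
        (g.comp ((castLE 𝒰 h).symm : 𝒰 x →ₗ[ℂ] 𝒰 y)) := by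
  subst h
  simp [castLE, LinearMap.comp_id]

lemma phi_cast' (φ : ∀ y : M, (𝒰 y ⊗[ℂ] 𝒬 y) →ₗ[ℂ] (𝒰 y ⊗[ℂ] 𝒬 y) →ₗ[ℂ]
      (Module.Dual ℂ (𝒰 y) →ₗ[ℂ] Module.Dual ℂ (𝒰 y) →ₗ[ℂ] ℂ))
    {y x : M} (h : y = x) (A B : 𝒰 y) (P Q : 𝒬 y) (f g : Module.Dual ℂ (𝒰 x)) :
    φ x ((castLE 𝒰 h) A ⊗ₜ[ℂ] (castLE 𝒬 h) P)
        ((castLE 𝒰 h) B ⊗ₜ[ℂ] (castLE 𝒬 h) Q) f g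
    = φ y (A ⊗ₜ[ℂ] P) (B ⊗ₜ[ℂ] Q)
        (f.comp ((castLE 𝒰 h) : 𝒰 y →ₗ[ℂ] 𝒰 x))
        (g.comp ((castLE 𝒰 h) : 𝒰 y →ₗ[ℂ] 𝒰 x)) := by
  subst h
  simp [castLE, LinearMap.comp_id]

end Helpers

/-- Liouville-type vanishing: if `F` and `G` are entire and
`G (t⁻¹) = t ^ k * F t` for `t ≠ 0` with `k ≥ 1`, then `F 0 = 0`. -/
lemma vanish_of_neg_twist (F G : ℂ → ℂ) (hF : Differentiable ℂ F) (hG : Differentiable ℂ G)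
    (k : ℕ) (hk : 1 ≤ k) (hrel : ∀ t : ℂ, t ≠ 0 → G t⁻¹ = t ^ k * F t) : F 0 = 0 := by
  have hG0 : ∀ s : ℂ, G s = 0 := by
    have htend : Filter.Tendsto G (Filter.cocompact ℂ) (nhds 0) := by
      have h1 : Filter.Tendsto (fun s : ℂ => s⁻¹) (Filter.cocompact ℂ) (nhds 0) := by
        rw [← Metric.cobounded_eq_cocompact]; exact Filter.tendsto_inv₀_cobounded
      have h2 : Filter.Tendsto (fun z : ℂ => z ^ k * F z) (nhds 0) (nhds 0) := by
        have h3 := ((continuous_pow k).mul hF.continuous).tendsto 0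
        exact (by simpa [zero_pow (by omega : k ≠ 0)] using h3 :
          Filter.Tendsto ((fun a : ℂ => a ^ k) * F) (nhds 0) (nhds 0))
      apply (h2.comp h1).congr'
      filter_upwards [(isCompact_singleton (x := (0:ℂ))).compl_mem_cocompact] with s hs
      have hs0 : s ≠ 0 := by simpa using hs
      simp only [Function.comp]
      rw [← hrel s⁻¹ (by simpa using hs0), inv_inv]
    intro s
    exact hG.apply_eq_of_tendsto_cocompact s htend
  have hFt : ∀ t : ℂ, t ≠ 0 → F t = 0 := by
    intro t ht
    have h5 := hrel t ht
    rw [hG0] at h5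
    rcases mul_eq_zero.mp h5.symm with h | h
    · exact absurd h (pow_ne_zero k ht)
    · exact h
  have hT : Filter.Tendsto F (nhdsWithin 0 {(0:ℂ)}ᶜ) (nhds (F 0)) :=
    (hF.continuous.tendsto 0).mono_left nhdsWithin_le_nhds
  have hT2 : Filter.Tendsto F (nhdsWithin 0 {(0:ℂ)}ᶜ) (nhds 0) := by
    apply Filter.Tendsto.congr' _ (tendsto_const_nhds (α := ℂ))
    filter_upwards [self_mem_nhdsWithin] with t ht using (hFt t ht).symm
  exact tendsto_nhds_unique hT hT2

lemma poly5_all (A0 A1 A2 A3 A4 : ℂ)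
    (h : ∀ᶠ c : ℂ in nhds 0, A0 + A1*c + A2*c^2 + A3*c^3 + A4*c^4 = 0) :
    ∀ c : ℂ, A0 + A1*c + A2*c^2 + A3*c^3 + A4*c^4 = 0 := by
  set P : Polynomial ℂ := Polynomial.C A0 + Polynomial.C A1 * Polynomial.X +
    Polynomial.C A2 * Polynomial.X^2 + Polynomial.C A3 * Polynomial.X^3 +
    Polynomial.C A4 * Polynomial.X^4 with hPdef
  have hP : P = 0 := by
    apply Polynomial.eq_zero_of_infinite_isRoot
    obtain ⟨ε, hε, hball⟩ := Metric.eventually_nhds_iff.mp h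
    apply Set.infinite_of_injective_forall_mem
      (f := fun j : ℕ => ((ε/(j+2) : ℝ) : ℂ)) ?_ ?_
    · intro j l hjl
      have h1 : (ε/((j:ℝ)+2)) = ε/((l:ℝ)+2) := by
        have : ((ε / ((j:ℝ) + 2) : ℝ) : ℂ) = ((ε / ((l:ℝ) + 2) : ℝ) : ℂ) := by
          simpa using hjl
        exact_mod_cast this
      have hj : ((j:ℝ)+2) ≠ 0 := by positivity
      have hl : ((l:ℝ)+2) ≠ 0 := by positivity
      rw [div_eq_div_iff hj hl] at h1
      have h2 : ((j:ℝ)) = l := by nlinarith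
      exact_mod_cast h2
    · intro j
      have hmem : dist ((ε/(j+2) : ℝ) : ℂ) 0 < ε := by
        rw [Complex.dist_eq, sub_zero, Complex.norm_real, Real.norm_eq_abs,
          abs_of_pos (by positivity), div_lt_iff₀ (by positivity)]
        nlinarith
      have hroot := hball hmem
      simp only [Set.mem_setOf_eq, Polynomial.IsRoot, hPdef, Polynomial.eval_add,
        Polynomial.eval_mul, Polynomial.eval_pow, Polynomial.eval_C, Polynomial.eval_X]
      linear_combination hroot
  intro c
  have := congrArg (Polynomial.eval c) hP
  simp [hPdef] at this
  linear_combination this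

lemma poly5_zero (A0 A1 A2 A3 A4 : ℂ)
    (h : ∀ᶠ c : ℂ in nhds 0, A0 + A1*c + A2*c^2 + A3*c^3 + A4*c^4 = 0) :
    A0 = 0 ∧ A1 = 0 ∧ A2 = 0 ∧ A3 = 0 ∧ A4 = 0 := by
  have hall := poly5_all A0 A1 A2 A3 A4 h
  have h0 := hall 0; have h1 := hall 1; have h2 := hall (-1)
  have h3 := hall 2; have h4 := hall (-2)
  have hA0 : A0 = 0 := by linear_combination h0
  have hA4 : A4 = 0 := by linear_combination (h3 + h4 - 4*h1 - 4*h2 + 6*h0)/24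
  have hA3 : A3 = 0 := by linear_combination (h3 - h4 - 2*h1 + 2*h2)/12
  have hA2 : A2 = 0 := by linear_combination (h1 + h2)/2 - h0 - hA4
  have hA1 : A1 = 0 := by linear_combination (h1 - h2)/2 - hA3
  exact ⟨hA0, hA1, hA2, hA3, hA4⟩


/-- Holomorphy of the bundle homomorphism `φ : Λ²(𝒰 ⊗ 𝒬) → Sym² 𝒰` along a
curve: all its matrix entries in the given trivializations are holomorphic in
the curve parameter, over both charts.  Here `φ` is encoded fiberwise as an
(alternating) bilinear map on `𝒰ₓ ⊗ 𝒬ₓ` with values in the space of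
(symmetric) bilinear forms on `𝒰ₓ*`, the canonical model of `Sym² 𝒰ₓ`. -/
def HolAlongQ (hm : 0 < m) {x : M} {u : 𝒰 x}
    (φ : ∀ y : M, (𝒰 y ⊗[ℂ] 𝒬 y) →ₗ[ℂ] (𝒰 y ⊗[ℂ] 𝒬 y) →ₗ[ℂ]
      (Module.Dual ℂ (𝒰 y) →ₗ[ℂ] Module.Dual ℂ (𝒰 y) →ₗ[ℂ] ℂ))
    (C : SAFCurveQ M 𝒰 𝒬 m n hm x u) : Prop :=
  (∀ (i j : Fin m) (p q : Fin n) (r s : Fin m),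
    Differentiable ℂ (fun t : ℂ =>
      φ (C.f t) ((C.τ t (Pi.single i 1)) ⊗ₜ[ℂ] (C.κ t (Pi.single p 1)))
        ((C.τ t (Pi.single j 1)) ⊗ₜ[ℂ] (C.κ t (Pi.single q 1)))
        ((LinearMap.proj r : ((Fin m → ℂ) →ₗ[ℂ] ℂ)).comp
          ((C.τ t).symm : 𝒰 (C.f t) ≃ₗ[ℂ] (Fin m → ℂ)).toLinearMap)
        ((LinearMap.proj s : ((Fin m → ℂ) →ₗ[ℂ] ℂ)).comp
          ((C.τ t).symm : 𝒰 (C.f t) ≃ₗ[ℂ] (Fin m → ℂ)).toLinearMap))) ∧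
  (∀ (i j : Fin m) (p q : Fin n) (r s : Fin m),
    Differentiable ℂ (fun t : ℂ =>
      φ (C.g t) ((C.τ' t (Pi.single i 1)) ⊗ₜ[ℂ] (C.κ' t (Pi.single p 1)))
        ((C.τ' t (Pi.single j 1)) ⊗ₜ[ℂ] (C.κ' t (Pi.single q 1)))
        ((LinearMap.proj r : ((Fin m → ℂ) →ₗ[ℂ] ℂ)).comp
          ((C.τ' t).symm : 𝒰 (C.g t) ≃ₗ[ℂ] (Fin m → ℂ)).toLinearMap)
        ((LinearMap.proj s : ((Fin m → ℂ) →ₗ[ℂ] ℂ)).comp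
          ((C.τ' t).symm : 𝒰 (C.g t) ≃ₗ[ℂ] (Fin m → ℂ)).toLinearMap)))


lemma castLE_cast_symm {y x : M} (h : y = x) (v : 𝒰 x) :
    castLE 𝒰 h (cast (congrArg 𝒰 h).symm v) = v := by subst h; rfl

lemma base_vanish {hm : 0 < m} {x : M} {u : 𝒰 x}
    (φ : ∀ y : M, (𝒰 y ⊗[ℂ] 𝒬 y) →ₗ[ℂ] (𝒰 y ⊗[ℂ] 𝒬 y) →ₗ[ℂ]
      (Module.Dual ℂ (𝒰 y) →ₗ[ℂ] Module.Dual ℂ (𝒰 y) →ₗ[ℂ] ℂ))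
    (C : SAFCurveQ M 𝒰 𝒬 m n hm x u) (hol : HolAlongQ hm φ C)
    (i j r s : Fin m) (p q : Fin n)
    (hlt : ((if (r:ℕ) = 0 then 1 else 0) + (if (s:ℕ) = 0 then 1 else 0) : ℤ)
         < (if (i:ℕ) = 0 then 1 else 0) + (if (j:ℕ) = 0 then 1 else 0)) :
    φ (C.f 0) ((C.τ 0 (Pi.single i 1)) ⊗ₜ[ℂ] (C.κ 0 (Pi.single p 1)))
      ((C.τ 0 (Pi.single j 1)) ⊗ₜ[ℂ] (C.κ 0 (Pi.single q 1)))
      ((LinearMap.proj r : ((Fin m → ℂ) →ₗ[ℂ] ℂ)).comp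
        ((C.τ 0).symm : 𝒰 (C.f 0) ≃ₗ[ℂ] (Fin m → ℂ)).toLinearMap)
      ((LinearMap.proj s : ((Fin m → ℂ) →ₗ[ℂ] ℂ)).comp
        ((C.τ 0).symm : 𝒰 (C.f 0) ≃ₗ[ℂ] (Fin m → ℂ)).toLinearMap) = 0 := by
  obtain ⟨hol1, hol2⟩ := hol
  set F := fun t : ℂ =>
      φ (C.f t) ((C.τ t (Pi.single i 1)) ⊗ₜ[ℂ] (C.κ t (Pi.single p 1)))
        ((C.τ t (Pi.single j 1)) ⊗ₜ[ℂ] (C.κ t (Pi.single q 1)))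
        ((LinearMap.proj r : ((Fin m → ℂ) →ₗ[ℂ] ℂ)).comp
          ((C.τ t).symm : 𝒰 (C.f t) ≃ₗ[ℂ] (Fin m → ℂ)).toLinearMap)
        ((LinearMap.proj s : ((Fin m → ℂ) →ₗ[ℂ] ℂ)).comp
          ((C.τ t).symm : 𝒰 (C.f t) ≃ₗ[ℂ] (Fin m → ℂ)).toLinearMap) with hFdef
  set G := fun t : ℂ =>
      φ (C.g t) ((C.τ' t (Pi.single i 1)) ⊗ₜ[ℂ] (C.κ' t (Pi.single p 1)))
        ((C.τ' t (Pi.single j 1)) ⊗ₜ[ℂ] (C.κ' t (Pi.single q 1)))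
        ((LinearMap.proj r : ((Fin m → ℂ) →ₗ[ℂ] ℂ)).comp
          ((C.τ' t).symm : 𝒰 (C.g t) ≃ₗ[ℂ] (Fin m → ℂ)).toLinearMap)
        ((LinearMap.proj s : ((Fin m → ℂ) →ₗ[ℂ] ℂ)).comp
          ((C.τ' t).symm : 𝒰 (C.g t) ≃ₗ[ℂ] (Fin m → ℂ)).toLinearMap) with hGdef
  set δ : ℤ := (if (i:ℕ) = 0 then 1 else 0) + (if (j:ℕ) = 0 then 1 else 0)
      - (if (r:ℕ) = 0 then 1 else 0) - (if (s:ℕ) = 0 then 1 else 0) with hδdef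
  have hδpos : 0 < δ := by omega
  set N : ℕ := C.a * δ.toNat with hNdef
  have hNδ : (N : ℤ) = (C.a : ℤ) * δ := by
    rw [hNdef]; push_cast [Int.toNat_of_nonneg hδpos.le]; ring
  have hN1 : 1 ≤ N := by
    have := C.ample
    have h2 : 1 ≤ δ.toNat := by omega
    calc 1 = 1 * 1 := by ring
    _ ≤ C.a * δ.toNat := Nat.mul_le_mul this h2
  have hrel : ∀ t : ℂ, t ≠ 0 → G t⁻¹ = t ^ N * F t := by
    intro t ht
    have E := C.compat t ht
    set d : Fin m → ℂ := fun l => if (l:ℕ) = 0 then (t:ℂ) ^ (-(C.a : ℤ)) else 1 with hd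
    have hdne : ∀ l, d l ≠ 0 := by
      intro l; rw [hd]; dsimp only
      split
      · exact zpow_ne_zero _ ht
      · exact one_ne_zero
    have hA : ∀ c : Fin m → ℂ, castLE 𝒰 E (C.τ t c) = C.τ' t⁻¹ (fun l => d l * c l) := by
      intro c; rw [C.trans t ht c]; exact castLE_cast_symm E _
    have hsingle : ∀ i : Fin m, (fun l => d l * (Pi.single i 1 : Fin m → ℂ) l) = d i • (Pi.single i 1 : Fin m → ℂ) := by
      intro i; funext l
      by_cases hl : l = i
      · subst hl; simp
      · simp [Pi.single_apply, hl]
    have hτ : ∀ i : Fin m, C.τ t (Pi.single i 1)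
        = (castLE 𝒰 E).symm (d i • C.τ' t⁻¹ (Pi.single i 1)) := by
      intro i
      rw [LinearEquiv.eq_symm_apply, hA, hsingle, map_smul]
    have hκ : ∀ p : Fin n, C.κ t (Pi.single p 1)
        = (castLE 𝒬 E).symm (C.κ' t⁻¹ (Pi.single p 1)) := by
      intro p; rw [C.transQ t ht, castLE_symm_cast]
    have hfun : ∀ r : Fin m,
        (LinearMap.proj r : ((Fin m → ℂ) →ₗ[ℂ] ℂ)).comp
          ((C.τ t).symm : 𝒰 (C.f t) ≃ₗ[ℂ] (Fin m → ℂ)).toLinearMap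
        = (d r)⁻¹ • (((LinearMap.proj r : ((Fin m → ℂ) →ₗ[ℂ] ℂ)).comp
            ((C.τ' t⁻¹).symm : 𝒰 (C.g t⁻¹) ≃ₗ[ℂ] (Fin m → ℂ)).toLinearMap).comp
            ((castLE 𝒰 E : 𝒰 (C.f t) ≃ₗ[ℂ] 𝒰 (C.g t⁻¹)) : 𝒰 (C.f t) →ₗ[ℂ] 𝒰 (C.g t⁻¹))) := by
      intro r
      apply LinearMap.ext; intro w
      have hw : castLE 𝒰 E w = C.τ' t⁻¹ (fun l => d l * ((C.τ t).symm w) l) := by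
        conv_lhs => rw [← (C.τ t).apply_symm_apply w]
        exact hA _
      simp only [LinearMap.comp_apply, LinearMap.smul_apply, LinearEquiv.coe_coe,
        LinearMap.proj_apply, smul_eq_mul, hw, LinearEquiv.symm_apply_apply]
      rw [inv_mul_cancel_left₀ (hdne r)]
    have key := phi_cast φ E (C.τ' t⁻¹ (Pi.single i 1)) (C.τ' t⁻¹ (Pi.single j 1))
      (C.κ' t⁻¹ (Pi.single p 1)) (C.κ' t⁻¹ (Pi.single q 1))
      (((LinearMap.proj r : ((Fin m → ℂ) →ₗ[ℂ] ℂ)).comp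
          ((C.τ' t⁻¹).symm : 𝒰 (C.g t⁻¹) ≃ₗ[ℂ] (Fin m → ℂ)).toLinearMap).comp
          ((castLE 𝒰 E : 𝒰 (C.f t) ≃ₗ[ℂ] 𝒰 (C.g t⁻¹)) : 𝒰 (C.f t) →ₗ[ℂ] 𝒰 (C.g t⁻¹)))
      (((LinearMap.proj s : ((Fin m → ℂ) →ₗ[ℂ] ℂ)).comp
          ((C.τ' t⁻¹).symm : 𝒰 (C.g t⁻¹) ≃ₗ[ℂ] (Fin m → ℂ)).toLinearMap).comp
          ((castLE 𝒰 E : 𝒰 (C.f t) ≃ₗ[ℂ] 𝒰 (C.g t⁻¹)) : 𝒰 (C.f t) →ₗ[ℂ] 𝒰 (C.g t⁻¹)))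
    have hclean : ∀ r : Fin m,
        (((LinearMap.proj r : ((Fin m → ℂ) →ₗ[ℂ] ℂ)) ∘ₗ
            ((C.τ' t⁻¹).symm : 𝒰 (C.g t⁻¹) ≃ₗ[ℂ] (Fin m → ℂ)).toLinearMap) ∘ₗ
            ((castLE 𝒰 E : 𝒰 (C.f t) ≃ₗ[ℂ] 𝒰 (C.g t⁻¹)) : 𝒰 (C.f t) →ₗ[ℂ] 𝒰 (C.g t⁻¹))) ∘ₗ
            (((castLE 𝒰 E).symm : 𝒰 (C.g t⁻¹) ≃ₗ[ℂ] 𝒰 (C.f t)) : 𝒰 (C.g t⁻¹) →ₗ[ℂ] 𝒰 (C.f t))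
        = (LinearMap.proj r : ((Fin m → ℂ) →ₗ[ℂ] ℂ)) ∘ₗ
            ((C.τ' t⁻¹).symm : 𝒰 (C.g t⁻¹) ≃ₗ[ℂ] (Fin m → ℂ)).toLinearMap := by
      intro r; apply LinearMap.ext; intro w; simp
    rw [hclean r, hclean s] at key
    have hF : F t = (d i * d j * (d r)⁻¹ * (d s)⁻¹) * G t⁻¹ := by
      rw [hFdef, hGdef]
      dsimp only
      rw [hτ i, hτ j, hκ p, hκ q, hfun r, hfun s]
      simp only [map_smul, ← TensorProduct.smul_tmul', LinearMap.smul_apply, smul_eq_mul]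
      rw [key]
      ring
    have h1 : d i * d j * (d r)⁻¹ * (d s)⁻¹ = (t:ℂ) ^ (-((C.a:ℤ) * δ)) := by
      have hdl : ∀ l : Fin m, d l = (t:ℂ) ^ (-(C.a:ℤ) * (if (l:ℕ) = 0 then 1 else 0)) := by
        intro l; rw [hd]; dsimp only
        by_cases h : (l:ℕ) = 0 <;> simp [h]
      rw [hdl i, hdl j, hdl r, hdl s, ← zpow_neg, ← zpow_neg,
        ← zpow_add₀ ht, ← zpow_add₀ ht, ← zpow_add₀ ht]
      congr 1
      rw [hδdef]; ring
    have hpow : (t:ℂ) ^ N * (t:ℂ) ^ (-((C.a:ℤ) * δ)) = 1 := by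
      rw [← zpow_natCast t N, ← zpow_add₀ ht, hNδ, add_neg_cancel, zpow_zero]
    rw [hF, h1, ← mul_assoc, hpow, one_mul]
  have := vanish_of_neg_twist F G (hol1 i j p q r s) (hol2 i j p q r s) N hN1 hrel
  rw [hFdef] at this
  exact this



lemma pi_expand {k : ℕ} (c : Fin k → ℂ) : c = ∑ i, c i • (Pi.single i 1 : Fin k → ℂ) := by
  funext l
  rw [Finset.sum_apply]
  simp only [Pi.smul_apply, Pi.single_apply, smul_eq_mul, mul_ite, mul_one, mul_zero]
  rw [Finset.sum_ite_eq (Finset.univ : Finset (Fin k)) l (fun i => c i)]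
  simp

lemma P12 {hm : 0 < m} {x : M} {u : 𝒰 x}
    (φ : ∀ y : M, (𝒰 y ⊗[ℂ] 𝒬 y) →ₗ[ℂ] (𝒰 y ⊗[ℂ] 𝒬 y) →ₗ[ℂ]
      (Module.Dual ℂ (𝒰 y) →ₗ[ℂ] Module.Dual ℂ (𝒰 y) →ₗ[ℂ] ℂ))
    (C : SAFCurveQ M 𝒰 𝒬 m n hm x u) (hol : HolAlongQ hm φ C) :
    (∀ (p q : 𝒬 x) (f g : Module.Dual ℂ (𝒰 x)), f u = 0 →
      φ x (u ⊗ₜ[ℂ] p) (u ⊗ₜ[ℂ] q) f g = 0) ∧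
    (∀ (v : 𝒰 x) (p q : 𝒬 x) (f g : Module.Dual ℂ (𝒰 x)), f u = 0 → g u = 0 →
      φ x (u ⊗ₜ[ℂ] p) (v ⊗ₜ[ℂ] q) f g = 0) := by
  obtain ⟨cc, hcc, hfib⟩ := C.fiber
  have hy : C.f 0 = x := C.basept
  have hu' : C.τ 0 (Pi.single ⟨0,hm⟩ 1) = cc • (castLE 𝒰 hy).symm u := by
    rw [castLE_symm_cast]; exact hfib
  have expandU : ∀ w : 𝒰 (C.f 0), w = ∑ i : Fin m,
      ((C.τ 0).symm w) i • C.τ 0 (Pi.single i 1) := by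
    intro w
    have h1 := congrArg (C.τ 0) (pi_expand ((C.τ 0).symm w))
    rw [(C.τ 0).apply_symm_apply, map_sum] at h1
    simp only [map_smul] at h1
    exact h1
  have expandQ : ∀ P : 𝒬 (C.f 0), P = ∑ p' : Fin n,
      ((C.κ 0).symm P) p' • C.κ 0 (Pi.single p' 1) := by
    intro P
    have h1 := congrArg (C.κ 0) (pi_expand ((C.κ 0).symm P))
    rw [(C.κ 0).apply_symm_apply, map_sum] at h1
    simp only [map_smul] at h1
    exact h1
  have expandDual : ∀ F : Module.Dual ℂ (𝒰 (C.f 0)), F = ∑ r : Fin m,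
      F (C.τ 0 (Pi.single r 1)) • ((LinearMap.proj r : ((Fin m → ℂ) →ₗ[ℂ] ℂ)).comp
        ((C.τ 0).symm : 𝒰 (C.f 0) ≃ₗ[ℂ] (Fin m → ℂ)).toLinearMap) := by
    intro F
    apply LinearMap.ext; intro w
    conv_lhs => rw [expandU w]
    rw [map_sum]
    simp only [map_smul, smul_eq_mul, LinearMap.sum_apply, LinearMap.smul_apply,
      LinearMap.comp_apply, LinearMap.proj_apply, LinearEquiv.coe_coe]
    exact Finset.sum_congr rfl (fun i _ => mul_comm _ _)
  have core1 : ∀ (P Q : 𝒬 (C.f 0)) (F G : Module.Dual ℂ (𝒰 (C.f 0))),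
      F (C.τ 0 (Pi.single ⟨0,hm⟩ 1)) = 0 →
      φ (C.f 0) ((C.τ 0 (Pi.single ⟨0,hm⟩ 1)) ⊗ₜ[ℂ] P)
        ((C.τ 0 (Pi.single ⟨0,hm⟩ 1)) ⊗ₜ[ℂ] Q) F G = 0 := by
    intro P Q F G hF
    conv_lhs => rw [expandQ P, expandQ Q, expandDual F, expandDual G]
    simp only [TensorProduct.tmul_sum, TensorProduct.sum_tmul, ← TensorProduct.smul_tmul',
      TensorProduct.tmul_smul, map_sum, map_smul, LinearMap.sum_apply, LinearMap.smul_apply,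
      smul_eq_mul, LinearMap.coe_sum, Finset.sum_apply, Finset.mul_sum]
    refine Finset.sum_eq_zero fun s _ => ?_
    refine Finset.sum_eq_zero fun r _ => ?_
    refine Finset.sum_eq_zero fun q' _ => ?_
    refine Finset.sum_eq_zero fun p' _ => ?_
    by_cases hr : (r:ℕ) = 0
    · have hr0 : r = ⟨0,hm⟩ := Fin.ext hr
      subst hr0
      simp [hF]
    · have hz := base_vanish φ C hol ⟨0,hm⟩ ⟨0,hm⟩ r s p' q'
        (by by_cases hs : (s:ℕ) = 0 <;> simp [hr, hs])
      simp only [hz, mul_zero, zero_mul]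
  have core2 : ∀ (V' : 𝒰 (C.f 0)) (P Q : 𝒬 (C.f 0)) (F G : Module.Dual ℂ (𝒰 (C.f 0))),
      F (C.τ 0 (Pi.single ⟨0,hm⟩ 1)) = 0 → G (C.τ 0 (Pi.single ⟨0,hm⟩ 1)) = 0 →
      φ (C.f 0) ((C.τ 0 (Pi.single ⟨0,hm⟩ 1)) ⊗ₜ[ℂ] P) (V' ⊗ₜ[ℂ] Q) F G = 0 := by
    intro V' P Q F G hF hG
    conv_lhs => rw [expandQ P, expandQ Q, expandU V', expandDual F, expandDual G]
    simp only [TensorProduct.tmul_sum, TensorProduct.sum_tmul, ← TensorProduct.smul_tmul',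
      TensorProduct.tmul_smul, map_sum, map_smul, LinearMap.sum_apply, LinearMap.smul_apply,
      smul_eq_mul, LinearMap.coe_sum, Finset.sum_apply, Finset.mul_sum]
    refine Finset.sum_eq_zero fun s _ => ?_
    refine Finset.sum_eq_zero fun r _ => ?_
    refine Finset.sum_eq_zero fun q' _ => ?_
    refine Finset.sum_eq_zero fun i _ => ?_
    refine Finset.sum_eq_zero fun p' _ => ?_
    by_cases hr : (r:ℕ) = 0
    · have hr0 : r = ⟨0,hm⟩ := Fin.ext hr
      subst hr0
      simp [hF]
    · by_cases hs : (s:ℕ) = 0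
      · have hs0 : s = ⟨0,hm⟩ := Fin.ext hs
        subst hs0
        simp [hG]
      · have hz := base_vanish φ C hol ⟨0,hm⟩ i r s p' q'
          (by by_cases hi : (i:ℕ) = 0 <;> simp [hr, hs, hi])
        simp only [hz, mul_zero, zero_mul]
  constructor
  · intro p q f g hf
    have htr := phi_cast' φ hy ((castLE 𝒰 hy).symm u) ((castLE 𝒰 hy).symm u)
      ((castLE 𝒬 hy).symm p) ((castLE 𝒬 hy).symm q) f g
    simp only [LinearEquiv.apply_symm_apply] at htr
    rw [htr]
    have hu'0 : (castLE 𝒰 hy).symm u = cc⁻¹ • C.τ 0 (Pi.single ⟨0,hm⟩ 1) := by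
      rw [hu', smul_smul, inv_mul_cancel₀ hcc, one_smul]
    rw [hu'0]
    simp only [← TensorProduct.smul_tmul', map_smul, LinearMap.smul_apply, smul_eq_mul]
    rw [core1 _ _ _ _ (by
      rw [hu', map_smul]
      simp only [smul_eq_mul, LinearMap.comp_apply, LinearEquiv.coe_coe,
        LinearEquiv.apply_symm_apply]
      rw [hf, mul_zero])]
    ring
  · intro v p q f g hf hg
    have htr := phi_cast' φ hy ((castLE 𝒰 hy).symm u) ((castLE 𝒰 hy).symm v)
      ((castLE 𝒬 hy).symm p) ((castLE 𝒬 hy).symm q) f g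
    simp only [LinearEquiv.apply_symm_apply] at htr
    rw [htr]
    have hu'0 : (castLE 𝒰 hy).symm u = cc⁻¹ • C.τ 0 (Pi.single ⟨0,hm⟩ 1) := by
      rw [hu', smul_smul, inv_mul_cancel₀ hcc, one_smul]
    rw [hu'0]
    simp only [← TensorProduct.smul_tmul', map_smul, LinearMap.smul_apply, smul_eq_mul]
    rw [core2 _ _ _ _ _ (by
      rw [hu', map_smul]
      simp only [smul_eq_mul, LinearMap.comp_apply, LinearEquiv.coe_coe,
        LinearEquiv.apply_symm_apply]
      rw [hf, mul_zero]) (by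
      rw [hu', map_smul]
      simp only [smul_eq_mul, LinearMap.comp_apply, LinearEquiv.coe_coe,
        LinearEquiv.apply_symm_apply]
      rw [hg, mul_zero])]
    ring



lemma linear_zero (K0 K1 : ℂ) (h : ∀ᶠ c : ℂ in nhds 0, K0 + K1*c = 0) :
    K0 = 0 ∧ K1 = 0 := by
  obtain ⟨h0, h1, _, _, _⟩ := poly5_zero K0 K1 0 0 0
    (by filter_upwards [h] with c hc; linear_combination hc)
  exact ⟨h0, h1⟩

lemma cubic_zero (K0 K1 K2 : ℂ) (h : ∀ᶠ c : ℂ in nhds 0, K0*c + K1*c^2 + K2*c^3 = 0) :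
    K0 = 0 ∧ K1 = 0 ∧ K2 = 0 := by
  obtain ⟨_, h1, h2, h3, _⟩ := poly5_zero 0 K0 K1 K2 0
    (by filter_upwards [h] with c hc; linear_combination hc)
  exact ⟨h1, h2, h3⟩

lemma quadratic_vs_csq (P Q R E0 E1 E2 : ℂ)
    (h : ∀ᶠ c : ℂ in nhds 0, (P + Q*c + R*c^2) - (E0 + E1*c + E2*c^2)*c^2 = 0) :
    R = E0 ∧ E1 = 0 ∧ E2 = 0 := by
  obtain ⟨_, _, h2, h3, h4⟩ := poly5_zero P Q (R - E0) (-E1) (-E2)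
    (by filter_upwards [h] with c hc; linear_combination hc)
  refine ⟨by linear_combination h2, by linear_combination -h3, by linear_combination -h4⟩

lemma quartic_ext (T00 T0 T11 S00 S0 S11 h0 h1 f0 f1 g0 g1 : ℂ)
    (h : ∀ᶠ c : ℂ in nhds 0,
      (T00 + T0*c + T11*c^2) * (h0 + h1*c)^2
        - (S00 + S0*c + S11*c^2)*((f0 + f1*c)*(g0 + g1*c)) = 0) :
    ∀ c : ℂ, (T00 + T0*c + T11*c^2) * (h0 + h1*c)^2
        - (S00 + S0*c + S11*c^2)*((f0 + f1*c)*(g0 + g1*c)) = 0 := by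
  have hall := poly5_all (T00*h0^2 - S00*f0*g0)
    (T0*h0^2 + 2*T00*h0*h1 - (S0*f0*g0 + S00*(f0*g1+f1*g0)))
    (T11*h0^2 + 2*T0*h0*h1 + T00*h1^2 - (S11*f0*g0 + S0*(f0*g1+f1*g0) + S00*f1*g1))
    (2*T11*h0*h1 + T0*h1^2 - (S11*(f0*g1+f1*g0) + S0*f1*g1))
    (T11*h1^2 - S11*f1*g1)
    (by filter_upwards [h] with c hc; linear_combination hc)
  intro c
  linear_combination hall c

lemma quartic_ext2 (L0 L1 L2 E0 E1 E2 h0 h1 : ℂ)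
    (h : ∀ᶠ c : ℂ in nhds 0,
      (L0 + L1*c + L2*c^2) - (E0 + E1*c + E2*c^2)*(h0 + h1*c)^2 = 0) :
    ∀ c : ℂ, (L0 + L1*c + L2*c^2) - (E0 + E1*c + E2*c^2)*(h0 + h1*c)^2 = 0 := by
  have hall := poly5_all (L0 - E0*h0^2)
    (L1 - (E1*h0^2 + 2*E0*h0*h1))
    (L2 - (E2*h0^2 + 2*E1*h0*h1 + E0*h1^2))
    (-(2*E2*h0*h1 + E1*h1^2))
    (-(E2*h1^2))
    (by filter_upwards [h] with c hc; linear_combination hc)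
  intro c
  linear_combination hall c



set_option maxHeartbeats 2000000 in
lemma main_at_point {hm : 0 < m}
    [∀ x, FiniteDimensional ℂ (𝒰 x)]
    (M' : Set M) (Uo : ∀ x : M, Set (𝒰 x))
    (hUo : ∀ x ∈ M', (Uo x).Nonempty ∧ (0 : 𝒰 x) ∉ Uo x)
    (hUoOpen : ∀ x ∈ M', ∀ u ∈ Uo x, ∀ w : 𝒰 x,
      ∀ᶠ c : ℂ in nhds 0, u + c • w ∈ Uo x)
    (φ : ∀ y : M, (𝒰 y ⊗[ℂ] 𝒬 y) →ₗ[ℂ] (𝒰 y ⊗[ℂ] 𝒬 y) →ₗ[ℂ]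
      (Module.Dual ℂ (𝒰 y) →ₗ[ℂ] Module.Dual ℂ (𝒰 y) →ₗ[ℂ] ℂ))
    (halt : ∀ (y : M) (z : 𝒰 y ⊗[ℂ] 𝒬 y), φ y z z = 0)
    (hsymval : ∀ (y : M) (z z' : 𝒰 y ⊗[ℂ] 𝒬 y)
      (f g : Module.Dual ℂ (𝒰 y)), φ y z z' f g = φ y z z' g f)
    (hSAF : ∀ x ∈ M', ∀ u ∈ Uo x,
      ∃ C : SAFCurveQ M 𝒰 𝒬 m n hm x u, HolAlongQ hm φ C)
    (x : M) (hx : x ∈ M') :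
    ∃ ω : 𝒬 x →ₗ[ℂ] 𝒬 x →ₗ[ℂ] ℂ, (∀ p, ω p p = 0) ∧
      ∀ (u v : 𝒰 x) (p q : 𝒬 x) (f g : Module.Dual ℂ (𝒰 x)),
        φ x (u ⊗ₜ[ℂ] p) (v ⊗ₜ[ℂ] q) f g = ω p q * (f u * g v + f v * g u) := by
  classical
  obtain ⟨⟨u0, hu0⟩, h0notin⟩ := hUo x hx
  have hNotZero : ∀ u ∈ Uo x, u ≠ 0 := fun u hu h => h0notin (h ▸ hu)
  have hu0ne : u0 ≠ 0 := hNotZero u0 hu0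
  -- existence of dual functionals
  have hdual : ∀ v : 𝒰 x, v ≠ 0 → ∃ h : Module.Dual ℂ (𝒰 x), h v = 1 := by
    intro v hv
    have h2 : ¬ ∀ f : Module.Dual ℂ (𝒰 x), f v = 0 := by
      rw [Module.forall_dual_apply_eq_zero_iff]; exact hv
    push_neg at h2
    obtain ⟨f, hf⟩ := h2
    exact ⟨(f v)⁻¹ • f, by simp [inv_mul_cancel₀ hf]⟩
  have hpair : ∀ a b : 𝒰 x, LinearIndependent ℂ ![a, b] →
      ∃ k0 k1 : Module.Dual ℂ (𝒰 x), k0 a = 1 ∧ k0 b = 0 ∧ k1 a = 0 ∧ k1 b = 1 := by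
    intro a b hind
    have hs := (linearIndepOn_id_range_iff hind.injective).mpr hind
    have hamem : a ∈ hs.extend (Set.subset_univ _) :=
      hs.subset_extend _ ⟨0, by simp⟩
    have hbmem : b ∈ hs.extend (Set.subset_univ _) :=
      hs.subset_extend _ ⟨1, by simp⟩
    have hab : a ≠ b := by
      intro h
      have h01 := hind.injective (a₁ := 0) (a₂ := 1) (by simp [h])
      simp at h01
    set B := Basis.extend hs with hB
    obtain ⟨ia, hBa⟩ : ∃ i, B i = a := ⟨⟨a, hamem⟩, Basis.extend_apply_self hs _⟩
    obtain ⟨ib, hBb⟩ : ∃ i, B i = b := ⟨⟨b, hbmem⟩, Basis.extend_apply_self hs _⟩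
    have hiaib : ia ≠ ib := by
      intro h
      exact hab ((hBa.symm.trans (congrArg B h)).trans hBb)
    have h2a : (fun z => B.repr z) (B ia) = (fun z => B.repr z) a := congrArg _ hBa
    have h2b : (fun z => B.repr z) (B ib) = (fun z => B.repr z) b := congrArg _ hBb
    simp only at h2a h2b
    refine ⟨B.coord ia, B.coord ib, ?_, ?_, ?_, ?_⟩
    · rw [Basis.coord_apply, ← h2a, Basis.repr_self]
      simp
    · rw [Basis.coord_apply, ← h2b, Basis.repr_self]
      simp [Finsupp.single_apply, hiaib.symm]
    · rw [Basis.coord_apply, ← h2a, Basis.repr_self]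
      simp [Finsupp.single_apply, hiaib]
    · rw [Basis.coord_apply, ← h2b, Basis.repr_self]
      simp
  have hindep_or : ∀ a w : 𝒰 x, a ≠ 0 →
      (∃ t : ℂ, w = t • a) ∨ LinearIndependent ℂ ![a, w] := by
    intro a w ha
    by_cases h : ∃ t : ℂ, t • a = w
    · exact Or.inl (h.imp fun t ht => ht.symm)
    · push_neg at h
      exact Or.inr ((LinearIndependent.pair_iff' ha).mpr h)
  -- pointwise facts from the SAF curves
  have P1 : ∀ u ∈ Uo x, ∀ (p q : 𝒬 x) (f g : Module.Dual ℂ (𝒰 x)), f u = 0 →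
      φ x (u ⊗ₜ[ℂ] p) (u ⊗ₜ[ℂ] q) f g = 0 := by
    intro u hu
    obtain ⟨C, hol⟩ := hSAF x hx u hu
    exact (P12 φ C hol).1
  have P2 : ∀ u ∈ Uo x, ∀ (v : 𝒰 x) (p q : 𝒬 x) (f g : Module.Dual ℂ (𝒰 x)),
      f u = 0 → g u = 0 → φ x (u ⊗ₜ[ℂ] p) (v ⊗ₜ[ℂ] q) f g = 0 := by
    intro u hu
    obtain ⟨C, hol⟩ := hSAF x hx u hu
    exact (P12 φ C hol).2
  have hBzero : ∀ (a : 𝒰 x) (rr : 𝒬 x) (f g : Module.Dual ℂ (𝒰 x)),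
      φ x (a ⊗ₜ[ℂ] rr) (a ⊗ₜ[ℂ] rr) f g = 0 := by
    intro a rr f g; rw [halt x (a ⊗ₜ[ℂ] rr)]; rfl
  -- L2a : diagonal values factor through a chosen functional
  have hLa : ∀ u ∈ Uo x, ∀ (h1 : Module.Dual ℂ (𝒰 x)), h1 u = 1 →
      ∀ (p q : 𝒬 x) (f g : Module.Dual ℂ (𝒰 x)),
      φ x (u ⊗ₜ[ℂ] p) (u ⊗ₜ[ℂ] q) f g
        = f u * g u * φ x (u ⊗ₜ[ℂ] p) (u ⊗ₜ[ℂ] q) h1 h1 := by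
    intro u hu h1 hh1 p q f g
    have A1 : φ x (u ⊗ₜ[ℂ] p) (u ⊗ₜ[ℂ] q) (f - f u • h1) g = 0 :=
      P1 u hu p q _ g (by simp [hh1])
    have A2 : φ x (u ⊗ₜ[ℂ] p) (u ⊗ₜ[ℂ] q) (g - g u • h1) h1 = 0 :=
      P1 u hu p q _ h1 (by simp [hh1])
    have S1 : φ x (u ⊗ₜ[ℂ] p) (u ⊗ₜ[ℂ] q) h1 g = φ x (u ⊗ₜ[ℂ] p) (u ⊗ₜ[ℂ] q) g h1 :=
      hsymval x _ _ h1 g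
    simp only [map_sub, map_smul, LinearMap.sub_apply, LinearMap.smul_apply,
      smul_eq_mul] at A1 A2
    linear_combination A1 + f u * S1 + f u * A2
  -- L2 : the key quadratic identity on Uo
  have hL2 : ∀ u ∈ Uo x, ∀ (p q : 𝒬 x) (f g h' : Module.Dual ℂ (𝒰 x)),
      φ x (u ⊗ₜ[ℂ] p) (u ⊗ₜ[ℂ] q) f g * (h' u)^2
        = φ x (u ⊗ₜ[ℂ] p) (u ⊗ₜ[ℂ] q) h' h' * (f u * g u) := by
    intro u hu p q f g h'
    obtain ⟨h1, hh1⟩ := hdual u (hNotZero u hu)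
    rw [hLa u hu h1 hh1 p q f g, hLa u hu h1 hh1 p q h' h']
    ring
  -- L3 : extension of the quadratic identity to all of the fiber
  have hL3 : ∀ (v : 𝒰 x) (p q : 𝒬 x) (f g h' : Module.Dual ℂ (𝒰 x)),
      φ x (v ⊗ₜ[ℂ] p) (v ⊗ₜ[ℂ] q) f g * (h' v)^2
        = φ x (v ⊗ₜ[ℂ] p) (v ⊗ₜ[ℂ] q) h' h' * (f v * g v) := by
    intro v p q f g h'
    set w := v - u0 with hwdef
    have hv : u0 + w = v := by rw [hwdef]; abel
    have key := quartic_ext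
      (φ x (u0 ⊗ₜ[ℂ] p) (u0 ⊗ₜ[ℂ] q) f g)
      (φ x (u0 ⊗ₜ[ℂ] p) (w ⊗ₜ[ℂ] q) f g + φ x (w ⊗ₜ[ℂ] p) (u0 ⊗ₜ[ℂ] q) f g)
      (φ x (w ⊗ₜ[ℂ] p) (w ⊗ₜ[ℂ] q) f g)
      (φ x (u0 ⊗ₜ[ℂ] p) (u0 ⊗ₜ[ℂ] q) h' h')
      (φ x (u0 ⊗ₜ[ℂ] p) (w ⊗ₜ[ℂ] q) h' h' + φ x (w ⊗ₜ[ℂ] p) (u0 ⊗ₜ[ℂ] q) h' h')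
      (φ x (w ⊗ₜ[ℂ] p) (w ⊗ₜ[ℂ] q) h' h')
      (h' u0) (h' w) (f u0) (f w) (g u0) (g w)
      (by
        filter_upwards [hUoOpen x hx u0 hu0 w] with c hc
        have h2 := hL2 (u0 + c • w) hc p q f g h'
        simp only [TensorProduct.add_tmul, ← TensorProduct.smul_tmul', map_add, map_smul,
          LinearMap.add_apply, LinearMap.smul_apply, smul_eq_mul] at h2
        linear_combination h2)
    have k1 := key 1
    rw [← hv]
    simp only [TensorProduct.add_tmul, ← TensorProduct.smul_tmul', map_add, map_smul,
      LinearMap.add_apply, LinearMap.smul_apply, smul_eq_mul]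
    linear_combination k1
  -- choose the base functional
  obtain ⟨h0, hh0⟩ := hdual u0 hu0ne
  -- L4 : constancy of the factor
  have hL4 : ∀ (v : 𝒰 x) (p q : 𝒬 x) (h' : Module.Dual ℂ (𝒰 x)),
      φ x (v ⊗ₜ[ℂ] p) (v ⊗ₜ[ℂ] q) h' h'
        = φ x (u0 ⊗ₜ[ℂ] p) (u0 ⊗ₜ[ℂ] q) h0 h0 * (h' v)^2 := by
    intro v p q h'
    have base : ∀ h' : Module.Dual ℂ (𝒰 x),
        φ x (u0 ⊗ₜ[ℂ] p) (u0 ⊗ₜ[ℂ] q) h' h'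
        = φ x (u0 ⊗ₜ[ℂ] p) (u0 ⊗ₜ[ℂ] q) h0 h0 * (h' u0)^2 := by
      intro h'
      have b1 := hL2 u0 hu0 p q h' h' h0
      rw [hh0] at b1
      simp only [one_pow, mul_one] at b1
      rw [b1]; ring
    rcases hindep_or u0 (v - u0) hu0ne with ⟨t, ht⟩ | hind
    · have hv : v = u0 + t • u0 := by
        have : v - u0 = t • u0 := ht
        rw [← this]; abel
      rw [hv]
      simp only [TensorProduct.add_tmul, ← TensorProduct.smul_tmul', map_add, map_smul,
        LinearMap.add_apply, LinearMap.smul_apply, smul_eq_mul]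
      linear_combination (1 + t)^2 * base h'
    · set w := v - u0 with hwdef
      have hv : u0 + w = v := by rw [hwdef]; abel
      obtain ⟨k0, k1, hk0a, hk0b, hk1a, hk1b⟩ := hpair u0 w hind
      have keyi := quadratic_vs_csq
        (φ x (u0 ⊗ₜ[ℂ] p) (u0 ⊗ₜ[ℂ] q) k1 k1)
        (φ x (u0 ⊗ₜ[ℂ] p) (w ⊗ₜ[ℂ] q) k1 k1 + φ x (w ⊗ₜ[ℂ] p) (u0 ⊗ₜ[ℂ] q) k1 k1)
        (φ x (w ⊗ₜ[ℂ] p) (w ⊗ₜ[ℂ] q) k1 k1)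
        (φ x (u0 ⊗ₜ[ℂ] p) (u0 ⊗ₜ[ℂ] q) k0 k0)
        (φ x (u0 ⊗ₜ[ℂ] p) (w ⊗ₜ[ℂ] q) k0 k0 + φ x (w ⊗ₜ[ℂ] p) (u0 ⊗ₜ[ℂ] q) k0 k0)
        (φ x (w ⊗ₜ[ℂ] p) (w ⊗ₜ[ℂ] q) k0 k0)
        (by
          filter_upwards [hUoOpen x hx u0 hu0 w] with c hc
          have h2 := hL2 (u0 + c • w) hc p q k1 k1 k0
          simp only [TensorProduct.add_tmul, ← TensorProduct.smul_tmul', map_add, map_smul,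
            LinearMap.add_apply, LinearMap.smul_apply, smul_eq_mul, hk0a, hk0b, hk1a, hk1b] at h2
          linear_combination h2)
      obtain ⟨hRE0, hE1, hE2⟩ := keyi
      have keyii := quartic_ext2
        (φ x (u0 ⊗ₜ[ℂ] p) (u0 ⊗ₜ[ℂ] q) h' h')
        (φ x (u0 ⊗ₜ[ℂ] p) (w ⊗ₜ[ℂ] q) h' h' + φ x (w ⊗ₜ[ℂ] p) (u0 ⊗ₜ[ℂ] q) h' h')
        (φ x (w ⊗ₜ[ℂ] p) (w ⊗ₜ[ℂ] q) h' h')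
        (φ x (u0 ⊗ₜ[ℂ] p) (u0 ⊗ₜ[ℂ] q) k0 k0)
        (φ x (u0 ⊗ₜ[ℂ] p) (w ⊗ₜ[ℂ] q) k0 k0 + φ x (w ⊗ₜ[ℂ] p) (u0 ⊗ₜ[ℂ] q) k0 k0)
        (φ x (w ⊗ₜ[ℂ] p) (w ⊗ₜ[ℂ] q) k0 k0)
        (h' u0) (h' w)
        (by
          filter_upwards [hUoOpen x hx u0 hu0 w] with c hc
          have h2 := hL2 (u0 + c • w) hc p q h' h' k0
          simp only [TensorProduct.add_tmul, ← TensorProduct.smul_tmul', map_add, map_smul,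
            LinearMap.add_apply, LinearMap.smul_apply, smul_eq_mul, hk0a, hk0b] at h2
          linear_combination h2)
      have k1' := keyii 1
      have hE0W : φ x (u0 ⊗ₜ[ℂ] p) (u0 ⊗ₜ[ℂ] q) k0 k0
          = φ x (u0 ⊗ₜ[ℂ] p) (u0 ⊗ₜ[ℂ] q) h0 h0 := by
        rw [base k0, hk0a]; ring
      rw [← hv]
      simp only [TensorProduct.add_tmul, ← TensorProduct.smul_tmul', map_add, map_smul,
        LinearMap.add_apply, LinearMap.smul_apply, smul_eq_mul]
      linear_combination k1' + (h' u0 + h' w)^2 * hE0W + (h' u0 + h' w)^2 * hE1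
        + (h' u0 + h' w)^2 * hE2
  -- L5 : full diagonal formula
  have hL5 : ∀ (v : 𝒰 x) (p q : 𝒬 x) (f g : Module.Dual ℂ (𝒰 x)),
      φ x (v ⊗ₜ[ℂ] p) (v ⊗ₜ[ℂ] q) f g
        = φ x (u0 ⊗ₜ[ℂ] p) (u0 ⊗ₜ[ℂ] q) h0 h0 * (f v * g v) := by
    intro v p q f g
    by_cases hv0 : v = 0
    · subst hv0
      simp
    · obtain ⟨h', hh'⟩ := hdual v hv0
      have h3 := hL3 v p q f g h'
      rw [hh'] at h3
      simp only [one_pow, mul_one] at h3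
      rw [h3, hL4 v p q h', hh']
      ring
  -- S : symmetric part
  have hS : ∀ (u v : 𝒰 x) (p q : 𝒬 x) (f g : Module.Dual ℂ (𝒰 x)),
      φ x (u ⊗ₜ[ℂ] p) (v ⊗ₜ[ℂ] q) f g + φ x (v ⊗ₜ[ℂ] p) (u ⊗ₜ[ℂ] q) f g
        = φ x (u0 ⊗ₜ[ℂ] p) (u0 ⊗ₜ[ℂ] q) h0 h0 * (f u * g v + f v * g u) := by
    intro u v p q f g
    have e1 := hL5 (u + v) p q f g
    have e2 := hL5 u p q f g
    have e3 := hL5 v p q f g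
    simp only [TensorProduct.add_tmul, map_add, LinearMap.add_apply, map_smul] at e1
    linear_combination e1 - e2 - e3
  -- B : vanishing of the antisymmetric-in-𝒬 part
  have hBUo : ∀ u ∈ Uo x, ∀ (v : 𝒰 x) (r : 𝒬 x) (f g : Module.Dual ℂ (𝒰 x)),
      φ x (v ⊗ₜ[ℂ] r) (u ⊗ₜ[ℂ] r) f g = 0 := by
    intro u hu
    have hune := hNotZero u hu
    obtain ⟨hu1, hhu1⟩ := hdual u hune
    have star : ∀ (w : 𝒰 x) (r : 𝒬 x) (α β : Module.Dual ℂ (𝒰 x)), α u = 0 → β u = 0 →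
        (φ x (w ⊗ₜ[ℂ] r) (u ⊗ₜ[ℂ] r) α β = 0 ∧
         β w * φ x (w ⊗ₜ[ℂ] r) (u ⊗ₜ[ℂ] r) α hu1
           + α w * φ x (w ⊗ₜ[ℂ] r) (u ⊗ₜ[ℂ] r) hu1 β = 0 ∧
         α w * β w * φ x (w ⊗ₜ[ℂ] r) (u ⊗ₜ[ℂ] r) hu1 hu1 = 0) := by
      intro w r α β hα hβ
      obtain ⟨hK0, hK1, hK2⟩ := cubic_zero
        (φ x (w ⊗ₜ[ℂ] r) (u ⊗ₜ[ℂ] r) α β)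
        (2 * hu1 w * φ x (w ⊗ₜ[ℂ] r) (u ⊗ₜ[ℂ] r) α β
          - α w * φ x (w ⊗ₜ[ℂ] r) (u ⊗ₜ[ℂ] r) hu1 β
          - β w * φ x (w ⊗ₜ[ℂ] r) (u ⊗ₜ[ℂ] r) α hu1)
        ((hu1 w)^2 * φ x (w ⊗ₜ[ℂ] r) (u ⊗ₜ[ℂ] r) α β
          - hu1 w * β w * φ x (w ⊗ₜ[ℂ] r) (u ⊗ₜ[ℂ] r) α hu1
          - α w * hu1 w * φ x (w ⊗ₜ[ℂ] r) (u ⊗ₜ[ℂ] r) hu1 β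
          + α w * β w * φ x (w ⊗ₜ[ℂ] r) (u ⊗ₜ[ℂ] r) hu1 hu1)
        (by
          filter_upwards [hUoOpen x hx u hu w] with c hc
          have hfc : ((1 + c * hu1 w) • α - (c * α w) • hu1) (u + c • w) = 0 := by
            simp only [LinearMap.sub_apply, LinearMap.smul_apply, map_add, map_smul,
              smul_eq_mul, hα, hhu1]
            ring
          have hgc : ((1 + c * hu1 w) • β - (c * β w) • hu1) (u + c • w) = 0 := by
            simp only [LinearMap.sub_apply, LinearMap.smul_apply, map_add, map_smul,
              smul_eq_mul, hβ, hhu1]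
            ring
          have h2 := P2 (u + c • w) hc u r r
            ((1 + c * hu1 w) • α - (c * α w) • hu1)
            ((1 + c * hu1 w) • β - (c * β w) • hu1) hfc hgc
          simp only [TensorProduct.add_tmul, ← TensorProduct.smul_tmul', map_add, map_smul,
            map_sub, LinearMap.add_apply, LinearMap.smul_apply, LinearMap.sub_apply,
            smul_eq_mul] at h2
          simp only [hBzero] at h2
          linear_combination h2)
      refine ⟨hK0, by linear_combination -hK1 + 2 * hu1 w * hK0, by
        linear_combination hK2 - (hu1 w)^2 * hK0 + hu1 w * (by
          linear_combination -hK1 + 2 * hu1 w * hK0 :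
            β w * φ x (w ⊗ₜ[ℂ] r) (u ⊗ₜ[ℂ] r) α hu1
              + α w * φ x (w ⊗ₜ[ℂ] r) (u ⊗ₜ[ℂ] r) hu1 β = 0)⟩
    have hc3 : ∀ (w : 𝒰 x) (r : 𝒬 x), φ x (w ⊗ₜ[ℂ] r) (u ⊗ₜ[ℂ] r) hu1 hu1 = 0 := by
      intro w r
      rcases hindep_or u w hune with ⟨t, ht⟩ | hind
      · rw [ht]
        simp [← TensorProduct.smul_tmul', map_smul, hBzero]
      · obtain ⟨k0, k1, hk0a, hk0b, hk1a, hk1b⟩ := hpair u w hind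
        have h3 := (star w r k1 k1 hk1a hk1a).2.2
        rw [hk1b] at h3
        simpa using h3
    have hd : ∀ (w : 𝒰 x) (r : 𝒬 x) (α : Module.Dual ℂ (𝒰 x)), α u = 0 →
        φ x (w ⊗ₜ[ℂ] r) (u ⊗ₜ[ℂ] r) α hu1 = 0 := by
      intro w r α hα
      rcases hindep_or u w hune with ⟨t, ht⟩ | hind
      · rw [ht]
        simp [← TensorProduct.smul_tmul', map_smul, hBzero]
      · by_cases hαw : α w = 0
        · obtain ⟨k0, k1, hk0a, hk0b, hk1a, hk1b⟩ := hpair u w hind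
          have h3 := (star w r α k1 hα hk1a).2.1
          rw [hk1b, hαw] at h3
          simpa using h3
        · have h3 := (star w r α α hα hα).2.1
          have hsym2 : φ x (w ⊗ₜ[ℂ] r) (u ⊗ₜ[ℂ] r) hu1 α
              = φ x (w ⊗ₜ[ℂ] r) (u ⊗ₜ[ℂ] r) α hu1 := hsymval x _ _ hu1 α
          rw [hsym2] at h3
          have h4 : α w * (2 * φ x (w ⊗ₜ[ℂ] r) (u ⊗ₜ[ℂ] r) α hu1) = 0 := by
            linear_combination h3
          rcases mul_eq_zero.mp h4 with h | h
          · exact absurd h hαw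
          · linear_combination h / 2
    intro v r f g
    have e3 := (star v r (f - f u • hu1) (g - g u • hu1)
      (by simp [hhu1]) (by simp [hhu1])).1
    have e1 := hd v r (f - f u • hu1) (by simp [hhu1])
    have e2 := hd v r (g - g u • hu1) (by simp [hhu1])
    have e5 : φ x (v ⊗ₜ[ℂ] r) (u ⊗ₜ[ℂ] r) hu1 g
        = φ x (v ⊗ₜ[ℂ] r) (u ⊗ₜ[ℂ] r) g hu1 := hsymval x _ _ hu1 g
    have e4 := hc3 v r
    simp only [map_sub, map_smul, LinearMap.sub_apply, LinearMap.smul_apply,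
      smul_eq_mul] at e1 e2 e3
    linear_combination e3 + f u * e5 + f u * e2 + g u * e1 - (f u * g u) * e4
      + f u * g u * e4 + f u * g u * e4
  have hB : ∀ (u v : 𝒰 x) (r : 𝒬 x) (f g : Module.Dual ℂ (𝒰 x)),
      φ x (v ⊗ₜ[ℂ] r) (u ⊗ₜ[ℂ] r) f g = 0 := by
    intro u v r f g
    have hlin := linear_zero
      (φ x (v ⊗ₜ[ℂ] r) (u0 ⊗ₜ[ℂ] r) f g)
      (φ x (v ⊗ₜ[ℂ] r) ((u - u0) ⊗ₜ[ℂ] r) f g)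
      (by
        filter_upwards [hUoOpen x hx u0 hu0 (u - u0)] with c hc
        have h2 := hBUo (u0 + c • (u - u0)) hc v r f g
        simp only [TensorProduct.add_tmul, ← TensorProduct.smul_tmul', map_add, map_smul,
          LinearMap.add_apply, LinearMap.smul_apply, smul_eq_mul] at h2
        linear_combination h2)
    have hu' : u = u0 + (u - u0) := by abel
    rw [hu']
    simp only [TensorProduct.add_tmul, map_add, LinearMap.add_apply]
    rw [hlin.1, hlin.2, add_zero]
  -- assemble the final formula
  have hfull : ∀ (u v : 𝒰 x) (p q : 𝒬 x) (f g : Module.Dual ℂ (𝒰 x)),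
      2 * φ x (u ⊗ₜ[ℂ] p) (v ⊗ₜ[ℂ] q) f g
        = φ x (u0 ⊗ₜ[ℂ] p) (u0 ⊗ₜ[ℂ] q) h0 h0 * (f u * g v + f v * g u) := by
    intro u v p q f g
    have hE1 : φ x (u ⊗ₜ[ℂ] p) (v ⊗ₜ[ℂ] q) f g
        + φ x (u ⊗ₜ[ℂ] q) (v ⊗ₜ[ℂ] p) f g = 0 := by
      have hb := hB v u (p + q) f g
      simp only [TensorProduct.tmul_add, map_add, LinearMap.add_apply] at hb
      have hbp := hB v u p f g
      have hbq := hB v u q f g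
      linear_combination hb - hbp - hbq
    have hA1 : φ x ((u ⊗ₜ[ℂ] q) + (v ⊗ₜ[ℂ] p)) ((u ⊗ₜ[ℂ] q) + (v ⊗ₜ[ℂ] p)) f g = 0 := by
      rw [halt x _]; rfl
    simp only [map_add, LinearMap.add_apply] at hA1
    have hzq : φ x (u ⊗ₜ[ℂ] q) (u ⊗ₜ[ℂ] q) f g = 0 := hBzero u q f g
    have hzp : φ x (v ⊗ₜ[ℂ] p) (v ⊗ₜ[ℂ] p) f g = 0 := hBzero v p f g
    have hA2 : φ x (v ⊗ₜ[ℂ] p) (u ⊗ₜ[ℂ] q) f g = - φ x (u ⊗ₜ[ℂ] q) (v ⊗ₜ[ℂ] p) f g := by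
      linear_combination hA1 - hzq - hzp
    have hs := hS u v p q f g
    linear_combination hs - hA2 + hE1
  -- build the bilinear form
  refine ⟨(2⁻¹ : ℂ) • LinearMap.mk₂ ℂ
      (fun p q => φ x (u0 ⊗ₜ[ℂ] p) (u0 ⊗ₜ[ℂ] q) h0 h0)
      (fun p p' q => by
        simp only [TensorProduct.tmul_add, map_add, LinearMap.add_apply])
      (fun c p q => by
        simp only [TensorProduct.tmul_smul, map_smul, LinearMap.smul_apply])
      (fun p q q' => by
        simp only [TensorProduct.tmul_add, map_add, LinearMap.add_apply])
      (fun c p q => by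
        simp only [TensorProduct.tmul_smul, map_smul, LinearMap.smul_apply]), ?_, ?_⟩
  · intro p
    simp only [LinearMap.smul_apply, LinearMap.mk₂_apply, hBzero, smul_zero]
  · intro u v p q f g
    simp only [LinearMap.smul_apply, LinearMap.mk₂_apply, smul_eq_mul]
    linear_combination (hfull u v p q f g) / 2


/- STATEMENT 18: If `(M, 𝒰)` satisfies the SAF-condition and `𝒬` is of
trivial type, then every (holomorphic) vector bundle homomorphism
`φ : Λ²(𝒰 ⊗ 𝒬) → Sym² 𝒰` is of the form
`φₓ(u⊗p, v⊗q) = ωₓ(p,q)·(u ⊙ v)` for a holomorphic section `ω` of `Λ²𝒬*`;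
here `u ⊙ v` is, in the bilinear-forms-on-`𝒰ₓ*` model of `Sym² 𝒰ₓ`, the form
`(f, g) ↦ f(u)g(v) + f(v)g(u)`. -/
theorem hom_wedge_to_sym_is_given_by_presymplectic_form
    [∀ x, FiniteDimensional ℂ (𝒰 x)] [∀ x, FiniteDimensional ℂ (𝒬 x)]
    (hm : 0 < m) (hm2 : 2 ≤ m)
    (hrkU : ∀ x, finrank ℂ (𝒰 x) = m) (hrkQ : ∀ x, finrank ℂ (𝒬 x) = n)
    (M' : Set M) (hM' : M'.Nonempty)
    (Uo : ∀ x : M, Set (𝒰 x))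
    (hUo : ∀ x ∈ M', (Uo x).Nonempty ∧ (0 : 𝒰 x) ∉ Uo x)
    (hUoOpen : ∀ x ∈ M', ∀ u ∈ Uo x, ∀ w : 𝒰 x,
      ∀ᶠ c : ℂ in nhds 0, u + c • w ∈ Uo x)
    (φ : ∀ y : M, (𝒰 y ⊗[ℂ] 𝒬 y) →ₗ[ℂ] (𝒰 y ⊗[ℂ] 𝒬 y) →ₗ[ℂ]
      (Module.Dual ℂ (𝒰 y) →ₗ[ℂ] Module.Dual ℂ (𝒰 y) →ₗ[ℂ] ℂ))
    -- φ is defined on Λ²(𝒰 ⊗ 𝒬), i.e. it is alternating :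
    (halt : ∀ (y : M) (z : 𝒰 y ⊗[ℂ] 𝒬 y), φ y z z = 0)
    -- φ takes values in Sym² 𝒰 (symmetric bilinear forms on 𝒰*) :
    (hsymval : ∀ (y : M) (z z' : 𝒰 y ⊗[ℂ] 𝒬 y)
      (f g : Module.Dual ℂ (𝒰 y)), φ y z z' f g = φ y z z' g f)
    -- SAF-condition for (M, 𝒰), triviality of 𝒬, and holomorphy of φ along
    -- the SAF curves :
    (hSAF : ∀ x ∈ M', ∀ u ∈ Uo x,
      ∃ C : SAFCurveQ M 𝒰 𝒬 m n hm x u, HolAlongQ hm φ C) :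
    ∃ ωs : ∀ x : M, 𝒬 x →ₗ[ℂ] 𝒬 x →ₗ[ℂ] ℂ,
      (∀ (x : M) (p : 𝒬 x), ωs x p p = 0) ∧
      ∀ x ∈ M', ∀ (u v : 𝒰 x) (p q : 𝒬 x) (f g : Module.Dual ℂ (𝒰 x)),
        φ x (u ⊗ₜ[ℂ] p) (v ⊗ₜ[ℂ] q) f g
          = ωs x p q * (f u * g v + f v * g u) := by
  classical
  choose ωfun h1 h2 using fun (x : M) (hx : x ∈ M') =>
    main_at_point (hm := hm) M' Uo hUo hUoOpen φ halt hsymval hSAF x hx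
  refine ⟨fun x => if hx : x ∈ M' then ωfun x hx else 0, ?_, ?_⟩
  · intro x p
    by_cases hx : x ∈ M'
    · simp only [dif_pos hx]
      exact h1 x hx p
    · simp only [dif_neg hx]
      rfl
  · intro x hx u v p q f g
    simp only [dif_pos hx]
    exact h2 x hx u v p q f g
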